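/- For the cycle C_n on n ≥ 3 vertices, the middle 3-rainbow domination number is γ*_{r3}(C_n) = (4n+2)/3 if n ≡ 1 (mod 3), (4n+1)/3 if n ≡ 2 (mod 3), and 4n/3 if n ≡ 0 (mod 3). -/

import Mathlib

open SimpleGraph Finset

/-- A `k`-rainbow dominating function on a graph `H`. -/
def IsRDF {W : Type*} (H : SimpleGraph W) (k : ℕ) (f : W → Finset (Fin k)) : Prop :=
  ∀ w, f w = ∅ → ∀ c : Fin k, ∃ u, H.Adj w u ∧ c ∈ f u

/-- The weight of a rainbow dominating function. -/
noncomputable def rdfWeight {W : Type*} [Fintype W] {k : ℕ} (f : W → Finset (Fin k)) : ℕ :=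
  ∑ w, (f w).card

/-- The `k`-rainbow domination number of a graph. -/
noncomputable def rdn {W : Type*} [Fintype W] (H : SimpleGraph W) (k : ℕ) : ℕ :=
  sInf {n | ∃ f : W → Finset (Fin k), IsRDF H k f ∧ rdfWeight f = n}

/-- The middle graph of `G`, on vertex set `V(G) ⊕ E(G)`. -/
def middleGraph {V : Type*} (G : SimpleGraph V) : SimpleGraph (V ⊕ G.edgeSet) where
  Adj x y :=
    match x, y with
    | Sum.inl _, Sum.inl _ => False
    | Sum.inl v, Sum.inr e => v ∈ (e : Sym2 V)
    | Sum.inr e, Sum.inl v => v ∈ (e : Sym2 V)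
    | Sum.inr e, Sum.inr f => e ≠ f ∧ ∃ v, v ∈ (e : Sym2 V) ∧ v ∈ (f : Sym2 V)
  symm := by
    refine ⟨?_⟩
    rintro (v | e) (w | f) h
    · exact h.elim
    · exact h
    · exact h
    · exact ⟨Ne.symm h.1, h.2.imp fun v hv => ⟨hv.2, hv.1⟩⟩
  loopless := by
    refine ⟨?_⟩
    rintro (v | e) h
    · exact h.elim
    · exact h.1 rfl

/-- The middle `k`-rainbow domination number `γ*_{rk}(G)`. -/
noncomputable def mrdn {V : Type*} [Fintype V] (G : SimpleGraph V) (k : ℕ) : ℕ :=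
  letI := Classical.decEq V
  letI : DecidableRel G.Adj := fun _ _ => Classical.dec _
  rdn (middleGraph G) k

/-- The `k`-rainbow domatic number: the maximum size of a family of `k`-rainbow
dominating functions with `∑ i |f i v| ≤ k` for each vertex `v`. -/
noncomputable def rdomatic {W : Type*} (H : SimpleGraph W) (k : ℕ) : ℕ :=
  sSup {d | ∃ F : Fin d → W → Finset (Fin k), Function.Injective F ∧
    (∀ i, IsRDF H k (F i)) ∧ ∀ w, (∑ i, (F i w).card) ≤ k}

/-- The matching number `α'(G)`. -/
noncomputable def matchingNumber {V : Type*} [Fintype V] (G : SimpleGraph V) : ℕ :=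
  sSup {n | ∃ M : Finset (Sym2 V), ↑M ⊆ G.edgeSet ∧
    (∀ e ∈ M, ∀ f ∈ M, e ≠ f → ∀ v : V, ¬(v ∈ e ∧ v ∈ f)) ∧ M.card = n}


namespace Stmt7Aux

open scoped Fin.CommRing

def Pot : ℕ → ℕ → ℕ → ℕ
  | 0,1,0 => 0
  | 3,0,0 => 1
  | 1,1,0 => 1
  | 0,1,1 => 2
  | 0,2,0 => 2
  | 2,0,1 => 3
  | 2,1,0 => 3
  | 1,0,2 => 4
  | 3,0,1 => 4
  | 1,1,1 => 4
  | 1,2,0 => 4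
  | 3,1,0 => 4
  | _,_,_ => 5

lemma keyFin : ∀ b0 a1 b1 a2 b2 : Fin 4,
    (a1.val = 0 → 3 ≤ b0.val + b1.val) →
    (a2.val = 0 → 3 ≤ b1.val + b2.val) →
    (b1.val = 0 → 3 ≤ b0.val + b2.val + a1.val + a2.val) →
    4 + Pot b1.val a2.val b2.val ≤ Pot b0.val a1.val b1.val + 3 * (a2.val + b2.val) := by decide

lemma key (b0 a1 b1 a2 b2 : ℕ) (h0 : b0 ≤ 3) (h1 : a1 ≤ 3) (h2 : b1 ≤ 3) (h3 : a2 ≤ 3) (h4 : b2 ≤ 3)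
    (hV1 : a1 = 0 → 3 ≤ b0 + b1)
    (hV2 : a2 = 0 → 3 ≤ b1 + b2)
    (hE : b1 = 0 → 3 ≤ b0 + b2 + a1 + a2) :
    4 + Pot b1 a2 b2 ≤ Pot b0 a1 b1 + 3 * (a2 + b2) :=
  keyFin ⟨b0, by omega⟩ ⟨a1, by omega⟩ ⟨b1, by omega⟩ ⟨a2, by omega⟩ ⟨b2, by omega⟩ hV1 hV2 hE

lemma cyclic_lb (m : ℕ) (a b : Fin (m+3) → ℕ)
    (ha : ∀ i, a i ≤ 3) (hb : ∀ i, b i ≤ 3)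
    (hV : ∀ i, a i = 0 → 3 ≤ b (i-1) + b i)
    (hE : ∀ i, b i = 0 → 3 ≤ b (i-1) + b (i+1) + a i + a (i+1)) :
    4 * (m+3) ≤ 3 * ∑ i, (a i + b i) := by
  set q : Fin (m+3) → ℤ := fun i => (Pot (b (i-1)) (a i) (b i) : ℤ) with hq
  have step : ∀ i : Fin (m+3), 4 + q (i+1) - q i ≤ 3 * (a (i+1) + b (i+1)) := by
    intro i
    have h1 : (i + 1) - 1 = i := add_sub_cancel_right i 1
    have hV2 := hV (i+1)
    rw [h1] at hV2
    have := key (b (i-1)) (a i) (b i) (a (i+1)) (b (i+1)) (hb _) (ha _) (hb _) (ha _) (hb _)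
      (hV i) hV2 (hE i)
    have hcast : (4 : ℤ) + Pot (b i) (a (i+1)) (b (i+1)) ≤ Pot (b (i-1)) (a i) (b i) + 3 * (a (i+1) + b (i+1)) := by
      exact_mod_cast this
    simp only [hq, h1]
    linarith
  have hsum : ∑ i : Fin (m+3), (4 + q (i+1) - q i) ≤ ∑ i : Fin (m+3), (3 : ℤ) * (a (i+1) + b (i+1)) :=
    Finset.sum_le_sum fun i _ => step i
  have htel : ∑ i : Fin (m+3), (4 + q (i+1) - q i) = 4 * (m+3) := by
    rw [show (fun i : Fin (m+3) => 4 + q (i+1) - q i) = fun i => 4 + (q (i+1) - q i) from by funext i; ring]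
    rw [Finset.sum_add_distrib, Finset.sum_sub_distrib]
    rw [show ∑ x : Fin (m+3), q (x+1) = ∑ x, q x from
      Fintype.sum_equiv (Equiv.addRight 1) _ _ (fun x => rfl)]
    simp [Finset.card_univ, mul_comm]
  have hre : ∑ i : Fin (m+3), (3 : ℤ) * (a (i+1) + b (i+1)) = 3 * ∑ i, ((a i : ℤ) + b i) := by
    rw [← Finset.mul_sum]
    congr 1
    exact Fintype.sum_equiv (Equiv.addRight 1) _ _ (fun x => rfl)
  have h5 : (4 * (m+3) : ℤ) ≤ 3 * ∑ i, ((a i : ℤ) + b i) := by rw [← htel]; rw [hre] at hsum; exact hsum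
  have h6 : (4 * (m+3) : ℤ) ≤ (3 * ∑ i, (a i + b i) : ℕ) := by push_cast; push_cast at h5; linarith
  exact_mod_cast h6

variable {m : ℕ}

def eps (m : ℕ) (i : Fin (m+3)) : (cycleGraph (m+3)).edgeSet :=
  ⟨s(i, i+1), by
    rw [SimpleGraph.mem_edgeSet, cycleGraph_adj']
    right
    rw [add_sub_cancel_left]
    exact Fin.val_one _⟩

lemma two_ne_zero3 : (2 : Fin (m+3)) ≠ 0 := by
  intro h
  have := congrArg Fin.val h
  rw [show ((2 : Fin (m+3)) : ℕ) = 2 from rfl, Fin.val_zero] at this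
  omega

lemma one_ne_zero3 : (1 : Fin (m+3)) ≠ 0 := by
  intro h
  have := congrArg Fin.val h
  rw [Fin.val_zero, Fin.val_one] at this
  omega

lemma eps_injective : Function.Injective (eps m) := by
  intro i j h
  have h' : s(i, i+1) = s(j, j+1) := congrArg Subtype.val h
  rw [Sym2.eq_iff] at h'
  rcases h' with ⟨h1, _⟩ | ⟨h1, h2⟩
  · exact h1
  · exact absurd (by linear_combination h2 - h1 : (2 : Fin (m+3)) = 0) two_ne_zero3

lemma eps_surjective : Function.Surjective (eps m) := by
  rintro ⟨e, he⟩
  induction e with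
  | _ u v =>
    rw [SimpleGraph.mem_edgeSet, cycleGraph_adj'] at he
    rcases he with h | h
    · refine ⟨v, Subtype.ext ?_⟩
      have h1 : u - v = 1 := Fin.ext (by rw [h]; exact (Fin.val_one _).symm)
      have hu : u = v + 1 := by rw [← h1]; ring
      show s(v, v+1) = s(u, v)
      rw [hu, Sym2.eq_swap]
    · refine ⟨u, Subtype.ext ?_⟩
      have h1 : v - u = 1 := Fin.ext (by rw [h]; exact (Fin.val_one _).symm)
      have hv : v = u + 1 := by rw [← h1]; ring
      show s(u, u+1) = s(u, v)
      rw [hv]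

lemma eps_bijective : Function.Bijective (eps m) := ⟨eps_injective, eps_surjective⟩

lemma adj_inl (v : Fin (m+3)) (u : Fin (m+3) ⊕ (cycleGraph (m+3)).edgeSet)
    (h : (middleGraph (cycleGraph (m+3))).Adj (Sum.inl v) u) :
    u = Sum.inr (eps m (v-1)) ∨ u = Sum.inr (eps m v) := by
  match u with
  | Sum.inl w => exact absurd h (by intro hc; exact hc)
  | Sum.inr e =>
    obtain ⟨j, rfl⟩ := eps_surjective e
    have hv : v ∈ s(j, j+1) := h
    rw [Sym2.mem_iff] at hv
    rcases hv with rfl | rfl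
    · right; rfl
    · left
      rw [add_sub_cancel_right]

lemma adj_inr (i : Fin (m+3)) (u : Fin (m+3) ⊕ (cycleGraph (m+3)).edgeSet)
    (h : (middleGraph (cycleGraph (m+3))).Adj (Sum.inr (eps m i)) u) :
    u = Sum.inl i ∨ u = Sum.inl (i+1) ∨ u = Sum.inr (eps m (i-1)) ∨ u = Sum.inr (eps m (i+1)) := by
  match u with
  | Sum.inl w =>
    have hv : w ∈ s(i, i+1) := h
    rw [Sym2.mem_iff] at hv
    rcases hv with rfl | rfl
    · exact Or.inl rfl
    · exact Or.inr (Or.inl rfl)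
  | Sum.inr e =>
    obtain ⟨j, rfl⟩ := eps_surjective e
    obtain ⟨hne, w, hw1, hw2⟩ := h
    right; right
    have hw1' : w ∈ s(i, i+1) := hw1
    have hw2' : w ∈ s(j, j+1) := hw2
    clear hw1 hw2
    rw [Sym2.mem_iff] at hw1' hw2'
    rename' hw1' => hw1, hw2' => hw2
    have hji : j ≠ i := fun hji => hne (by rw [hji])
    rcases hw1 with rfl | rfl <;> rcases hw2 with h2 | h2
    · exact absurd h2.symm hji
    · left; congr 1; rw [h2, add_sub_cancel_right]
    · right; congr 1; rw [h2]
    · exact absurd (add_right_cancel h2.symm) hji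

lemma adj_vl (v : Fin (m+3)) : (middleGraph (cycleGraph (m+3))).Adj (Sum.inl v) (Sum.inr (eps m (v-1))) := by
  show v ∈ s(v-1, v-1+1)
  rw [sub_add_cancel]
  rw [Sym2.mem_iff]; right; rfl

lemma adj_vr (v : Fin (m+3)) : (middleGraph (cycleGraph (m+3))).Adj (Sum.inl v) (Sum.inr (eps m v)) := by
  show v ∈ s(v, v+1)
  rw [Sym2.mem_iff]; left; rfl

lemma adj_e_inl (i : Fin (m+3)) : (middleGraph (cycleGraph (m+3))).Adj (Sum.inr (eps m i)) (Sum.inl i) := by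
  show i ∈ s(i, i+1); rw [Sym2.mem_iff]; left; rfl

lemma adj_e_inl' (i : Fin (m+3)) : (middleGraph (cycleGraph (m+3))).Adj (Sum.inr (eps m i)) (Sum.inl (i+1)) := by
  show (i+1) ∈ s(i, i+1); rw [Sym2.mem_iff]; right; rfl

lemma adj_e_sub (i : Fin (m+3)) : (middleGraph (cycleGraph (m+3))).Adj (Sum.inr (eps m i)) (Sum.inr (eps m (i-1))) := by
  refine ⟨?_, i, ?_, ?_⟩
  · intro h
    have h2 := eps_injective h
    exact absurd (by linear_combination h2 : (1 : Fin (m+3)) = 0) one_ne_zero3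
  · show i ∈ s(i, i+1)
    rw [Sym2.mem_iff]; left; rfl
  · show i ∈ s(i-1, i-1+1)
    rw [sub_add_cancel, Sym2.mem_iff]; right; rfl

lemma adj_e_add (i : Fin (m+3)) : (middleGraph (cycleGraph (m+3))).Adj (Sum.inr (eps m i)) (Sum.inr (eps m (i+1))) := by
  refine ⟨?_, i+1, ?_, ?_⟩
  · intro h
    have h2 := eps_injective h
    exact absurd (by linear_combination -h2 : (1 : Fin (m+3)) = 0) one_ne_zero3
  · show i + 1 ∈ s(i, i+1)
    rw [Sym2.mem_iff]; right; rfl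
  · show i + 1 ∈ s(i+1, i+1+1)
    rw [Sym2.mem_iff]; left; rfl

-- value lemmas for Fin arithmetic
lemma val_sub_one (i : Fin (m+3)) (h : i.val ≠ 0) : (i - 1).val = i.val - 1 := by
  have h1 : ((1 : Fin (m+3)) : ℕ) = 1 := Fin.val_one _
  rw [Fin.sub_def]
  simp only [h1]
  have hlt : i.val < m + 3 := i.isLt
  rw [show m + 3 - 1 + i.val = (i.val - 1) + (m+3) by omega, Nat.add_mod_right]
  exact Nat.mod_eq_of_lt (by omega)

lemma val_sub_one_zero (i : Fin (m+3)) (h : i.val = 0) : (i - 1).val = m + 2 := by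
  have h1 : ((1 : Fin (m+3)) : ℕ) = 1 := Fin.val_one _
  rw [Fin.sub_def]
  simp only [h1, h]
  rw [Nat.add_zero]
  exact Nat.mod_eq_of_lt (by omega)

lemma val_add_one (i : Fin (m+3)) (h : i.val ≠ m + 2) : (i + 1).val = i.val + 1 := by
  have h1 : ((1 : Fin (m+3)) : ℕ) = 1 := Fin.val_one _
  rw [Fin.add_def, h1]
  exact Nat.mod_eq_of_lt (by have := i.isLt; omega)

lemma val_add_one_last (i : Fin (m+3)) (h : i.val = m + 2) : (i + 1).val = 0 := by
  have h1 : ((1 : Fin (m+3)) : ℕ) = 1 := Fin.val_one _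
  rw [Fin.add_def, h1, h]
  simp

-- the construction
def gfun (m : ℕ) (i : Fin (m+3)) : Finset (Fin 3) :=
  if i.val % 3 = 0 ∧ ¬(m % 3 = 1 ∧ i.val = m + 2) then Finset.univ else ∅

def hfun (m : ℕ) (i : Fin (m+3)) : Finset (Fin 3) :=
  if i.val % 3 = 2 then {0} else if m % 3 = 1 ∧ i.val = m + 2 then ({1, 2} : Finset (Fin 3)) else ∅

noncomputable def Fcon (m : ℕ) : (Fin (m+3) ⊕ (cycleGraph (m+3)).edgeSet) → Finset (Fin 3) :=
  Sum.elim (hfun m) (fun e => gfun m ((Equiv.ofBijective _ (eps_bijective (m := m))).symm e))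

lemma Fcon_inr (i : Fin (m+3)) : Fcon m (Sum.inr (eps m i)) = gfun m i := by
  show gfun m ((Equiv.ofBijective _ (eps_bijective (m := m))).symm (Equiv.ofBijective _ (eps_bijective (m := m)) i)) = gfun m i
  rw [Equiv.symm_apply_apply]

lemma isrdf : IsRDF (middleGraph (cycleGraph (m+3))) 3 (Fcon m) := by
  intro w hw c
  match w with
  | Sum.inl v =>
    have hv : hfun m v = ∅ := hw
    have hlt : v.val < m + 3 := v.isLt
    have h2 : v.val % 3 ≠ 2 := by
      intro h; rw [hfun, if_pos h] at hv; exact absurd hv (by decide)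
    have hsp : ¬(m % 3 = 1 ∧ v.val = m + 2) := by
      intro h
      rw [hfun, if_neg h2, if_pos h] at hv; exact absurd hv (by decide)
    rcases (show v.val % 3 = 0 ∨ v.val % 3 = 1 ∨ v.val % 3 = 2 by omega) with h0 | h1 | h2'
    · refine ⟨Sum.inr (eps m v), adj_vr v, ?_⟩
      rw [show Fcon m (Sum.inr (eps m v)) = gfun m v from Fcon_inr v, gfun, if_pos ⟨h0, hsp⟩]
      exact Finset.mem_univ c
    · refine ⟨Sum.inr (eps m (v - 1)), adj_vl v, ?_⟩
      rw [show Fcon m (Sum.inr (eps m (v-1))) = gfun m (v-1) from Fcon_inr _, gfun]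
      have hv0 : v.val ≠ 0 := by omega
      have hval : (v - 1).val = v.val - 1 := val_sub_one v hv0
      rw [if_pos ⟨by omega, by omega⟩]
      exact Finset.mem_univ c
    · exact absurd h2' h2
  | Sum.inr e =>
    obtain ⟨i, rfl⟩ := eps_surjective e
    have hg : gfun m i = ∅ := by rw [← Fcon_inr i]; exact hw
    have hlt : i.val < m + 3 := i.isLt
    have hcases : ¬(i.val % 3 = 0 ∧ ¬(m % 3 = 1 ∧ i.val = m + 2)) := by
      intro h; rw [gfun, if_pos h] at hg; exact absurd hg (by decide)
    rcases (show i.val % 3 = 0 ∨ i.val % 3 = 1 ∨ i.val % 3 = 2 by omega) with h0 | h1 | h2'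
    · -- i.val % 3 = 0 and special: i.val = m+2, m % 3 = 1; use e_{i+1} = e_0 full
      have hsp : m % 3 = 1 ∧ i.val = m + 2 := by by_contra hc; exact hcases ⟨h0, hc⟩
      refine ⟨Sum.inr (eps m (i + 1)), adj_e_add i, ?_⟩
      rw [Fcon_inr, gfun, if_pos ?_]
      · exact Finset.mem_univ c
      · have : (i + 1).val = 0 := val_add_one_last i hsp.2
        exact ⟨by omega, by omega⟩
    · -- use e_{i-1}, which is full
      refine ⟨Sum.inr (eps m (i - 1)), adj_e_sub i, ?_⟩
      rw [Fcon_inr, gfun, if_pos ?_]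
      · exact Finset.mem_univ c
      · have hv0 : i.val ≠ 0 := by omega
        have hval : (i - 1).val = i.val - 1 := val_sub_one i hv0
        exact ⟨by omega, by omega⟩
    · -- i.val % 3 = 2
      by_cases hend : i.val = m + 2
      · -- wraps: i+1 = 0, g 0 = univ since m % 3 = 0 here
        have hm : m % 3 = 0 := by omega
        refine ⟨Sum.inr (eps m (i + 1)), adj_e_add i, ?_⟩
        rw [Fcon_inr, gfun, if_pos ?_]
        · exact Finset.mem_univ c
        · have : (i + 1).val = 0 := val_add_one_last i hend
          exact ⟨by omega, by omega⟩
      · have hval : (i + 1).val = i.val + 1 := val_add_one i hend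
        by_cases hsp : m % 3 = 1 ∧ (i + 1).val = m + 2
        · -- the exceptional pair: h i = {0}, h (i+1) = {1,2}
          have hhi : hfun m i = {0} := by rw [hfun, if_pos h2']
          have hhi1 : hfun m (i+1) = ({1,2} : Finset (Fin 3)) := by
            rw [hfun, if_neg (by omega), if_pos hsp]
          by_cases hc0 : c = 0
          · exact ⟨Sum.inl i, adj_e_inl i, by show c ∈ hfun m i; rw [hhi, hc0]; decide⟩
          · refine ⟨Sum.inl (i+1), adj_e_inl' i, ?_⟩
            show c ∈ hfun m (i+1)
            rw [hhi1]
            fin_cases c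
            · exact absurd rfl hc0
            · decide
            · decide
        · refine ⟨Sum.inr (eps m (i + 1)), adj_e_add i, ?_⟩
          rw [Fcon_inr, gfun, if_pos ⟨by omega, by rw [hval] at hsp; omega⟩]
          exact Finset.mem_univ c

section WithInst

variable [instE : Fintype ((cycleGraph (m+3)).edgeSet)]

lemma weight_eq (f : (Fin (m+3) ⊕ (cycleGraph (m+3)).edgeSet) → Finset (Fin 3)) :
    rdfWeight f = (∑ i, (f (Sum.inl i)).card) + ∑ i, (f (Sum.inr (eps m i))).card := by
  show ∑ w, (f w).card = _
  rw [← Fintype.sum_bijective (Sum.map id (eps m)) (Function.Bijective.sumMap Function.bijective_id eps_bijective)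
    (fun x => (f (Sum.map id (eps m) x)).card) (fun w => (f w).card) (fun x => rfl)]
  rw [Fintype.sum_sum_type]
  rfl

-- counting
def psi (k : ℕ) : ℕ := (if k % 3 = 0 then 3 else 0) + (if k % 3 = 2 then 1 else 0)

lemma psum : ∀ k, ∑ j ∈ Finset.range k, psi j = 4 * (k / 3) + (if k % 3 = 0 then 0 else 3) := by
  intro k
  induction k with
  | zero => simp
  | succ k ih =>
    rw [Finset.sum_range_succ, ih]
    have h3 : k % 3 = 0 ∨ k % 3 = 1 ∨ k % 3 = 2 := by omega
    unfold psi
    rcases h3 with h | h | h <;> split_ifs <;> omega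

lemma card_gfun (i : Fin (m+3)) :
    (gfun m i).card = if i.val % 3 = 0 ∧ ¬(m % 3 = 1 ∧ i.val = m + 2) then 3 else 0 := by
  rw [gfun]; split_ifs <;> simp

lemma card_hfun (i : Fin (m+3)) :
    (hfun m i).card = if i.val % 3 = 2 then 1 else if m % 3 = 1 ∧ i.val = m + 2 then 2 else 0 := by
  rw [hfun]; split_ifs <;> rfl

lemma weight_val : rdfWeight (Fcon m) = (4 * (m+3) + 2) / 3 := by
  rw [weight_eq]
  have h1 : ∀ i : Fin (m+3), (Fcon m (Sum.inl i)).card = (hfun m i).card := fun i => rfl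
  have h2 : ∀ i : Fin (m+3), (Fcon m (Sum.inr (eps m i))).card = (gfun m i).card := fun i => by rw [Fcon_inr]
  simp only [h1, h2, card_gfun, card_hfun]
  rw [← Finset.sum_add_distrib]
  rw [Fin.sum_univ_eq_sum_range (fun k => (if k % 3 = 2 then 1 else if m % 3 = 1 ∧ k = m + 2 then 2 else 0)
    + (if k % 3 = 0 ∧ ¬(m % 3 = 1 ∧ k = m + 2) then 3 else 0))]
  rw [show m + 3 = (m + 2) + 1 from rfl, Finset.sum_range_succ]
  have e5 : ∑ k ∈ Finset.range (m+2), ((if k % 3 = 2 then 1 else if m % 3 = 1 ∧ k = m + 2 then 2 else 0)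
      + (if k % 3 = 0 ∧ ¬(m % 3 = 1 ∧ k = m + 2) then 3 else 0)) = ∑ k ∈ Finset.range (m+2), psi k := by
    apply Finset.sum_congr rfl
    intro k hk
    have := Finset.mem_range.mp hk
    unfold psi
    split_ifs <;> omega
  rw [e5, psum]
  split_ifs <;> omega

lemma lower_bound (f : (Fin (m+3) ⊕ (cycleGraph (m+3)).edgeSet) → Finset (Fin 3))
    (hf : IsRDF (middleGraph (cycleGraph (m+3))) 3 f) :
    4 * (m + 3) ≤ 3 * rdfWeight f := by
  set a : Fin (m+3) → ℕ := fun i => (f (Sum.inl i)).card with hadef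
  set b : Fin (m+3) → ℕ := fun i => (f (Sum.inr (eps m i))).card with hbdef
  have hcard3 : ∀ s : Finset (Fin 3), s.card ≤ 3 := fun s => by
    have := s.card_le_univ; simpa using this
  have hV : ∀ i, a i = 0 → 3 ≤ b (i-1) + b i := by
    intro i hai
    have hempty : f (Sum.inl i) = ∅ := Finset.card_eq_zero.mp hai
    have hsub : (Finset.univ : Finset (Fin 3)) ⊆ f (Sum.inr (eps m (i-1))) ∪ f (Sum.inr (eps m i)) := by
      intro c _
      obtain ⟨u, hu, hc⟩ := hf (Sum.inl i) hempty c
      rcases adj_inl i u hu with rfl | rfl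
      · exact Finset.mem_union_left _ hc
      · exact Finset.mem_union_right _ hc
    have h3 : (3 : ℕ) ≤ (f (Sum.inr (eps m (i-1))) ∪ f (Sum.inr (eps m i))).card := by
      have := Finset.card_le_card hsub
      simpa using this
    have := Finset.card_union_le (f (Sum.inr (eps m (i-1)))) (f (Sum.inr (eps m i)))
    simp only [hbdef]
    omega
  have hE : ∀ i, b i = 0 → 3 ≤ b (i-1) + b (i+1) + a i + a (i+1) := by
    intro i hbi
    have hempty : f (Sum.inr (eps m i)) = ∅ := Finset.card_eq_zero.mp hbi
    have hsub : (Finset.univ : Finset (Fin 3)) ⊆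
        f (Sum.inl i) ∪ f (Sum.inl (i+1)) ∪ f (Sum.inr (eps m (i-1))) ∪ f (Sum.inr (eps m (i+1))) := by
      intro c _
      obtain ⟨u, hu, hc⟩ := hf (Sum.inr (eps m i)) hempty c
      rcases adj_inr i u hu with rfl | rfl | rfl | rfl
      · exact Finset.mem_union_left _ (Finset.mem_union_left _ (Finset.mem_union_left _ hc))
      · exact Finset.mem_union_left _ (Finset.mem_union_left _ (Finset.mem_union_right _ hc))
      · exact Finset.mem_union_left _ (Finset.mem_union_right _ hc)
      · exact Finset.mem_union_right _ hc
    have h3 : (3 : ℕ) ≤ (f (Sum.inl i) ∪ f (Sum.inl (i+1)) ∪ f (Sum.inr (eps m (i-1))) ∪ f (Sum.inr (eps m (i+1)))).card := by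
      have := Finset.card_le_card hsub
      simpa using this
    have c1 := Finset.card_union_le (f (Sum.inl i) ∪ f (Sum.inl (i+1)) ∪ f (Sum.inr (eps m (i-1)))) (f (Sum.inr (eps m (i+1))))
    have c2 := Finset.card_union_le (f (Sum.inl i) ∪ f (Sum.inl (i+1))) (f (Sum.inr (eps m (i-1))))
    have c3 := Finset.card_union_le (f (Sum.inl i)) (f (Sum.inl (i+1)))
    simp only [hadef, hbdef]
    omega
  have hmain := cyclic_lb m a b (fun i => hcard3 _) (fun i => hcard3 _) hV hE
  have hw : rdfWeight f = (∑ i, a i) + ∑ i, b i := weight_eq f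
  rw [Finset.sum_add_distrib] at hmain
  omega

lemma main_eq : rdn (middleGraph (cycleGraph (m+3))) 3 = (4 * (m+3) + 2) / 3 := by
  apply le_antisymm
  · refine Nat.sInf_le ?_
    show ∃ f, IsRDF (middleGraph (cycleGraph (m+3))) 3 f ∧ rdfWeight f = (4 * (m+3) + 2) / 3
    exact ⟨Fcon m, isrdf, weight_val⟩
  · refine le_csInf ⟨(4 * (m+3) + 2) / 3, show ∃ f, IsRDF (middleGraph (cycleGraph (m+3))) 3 f ∧ rdfWeight f = (4 * (m+3) + 2) / 3 from ⟨Fcon m, isrdf, weight_val⟩⟩ ?_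
    rintro x ⟨f, hf, rfl⟩
    have := lower_bound f hf
    have h2 : 3 ∣ 3 * rdfWeight f := Dvd.intro _ rfl
    omega

end WithInst

lemma rdn_congr {W : Type*} (i1 i2 : Fintype W) (H : SimpleGraph W) (k : ℕ) :
    @rdn W i1 H k = @rdn W i2 H k := by
  congr 1
  exact Subsingleton.elim i1 i2

end Stmt7Aux

/-- middle 3-rainbow domination number of cycles. -/
theorem stmt7 (n : ℕ) (hn : 3 ≤ n) :
    (n % 3 = 1 → mrdn (cycleGraph n) 3 = (4 * n + 2) / 3) ∧
    (n % 3 = 2 → mrdn (cycleGraph n) 3 = (4 * n + 1) / 3) ∧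
    (n % 3 = 0 → mrdn (cycleGraph n) 3 = 4 * n / 3) := by
  obtain ⟨m, rfl⟩ : ∃ m, n = m + 3 := ⟨n - 3, by omega⟩
  have h : mrdn (cycleGraph (m+3)) 3 = (4 * (m+3) + 2) / 3 := by
    unfold mrdn
    letI := Classical.decEq (Fin (m+3))
    letI : DecidableRel (cycleGraph (m+3)).Adj := fun _ _ => Classical.dec _
    exact (Stmt7Aux.rdn_congr _ _ _ _).trans Stmt7Aux.main_eq
  refine ⟨fun hmod => ?_, fun hmod => ?_, fun hmod => ?_⟩ <;> rw [h] <;> omega
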